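/- Consider the one-dimensional Canberra distance h(x,y) := |x−y|/(|x|+|y|) (with h(0,0) := 0), and let Φ(x,t) := μ(B_t(x)) with μ Lebesgue measure on ℝ. Then for every x ≠ 0 and t ∈ (0,1), Φ(x,t) = 4t|x|/(1−t²); moreover for t ∈ (0,1), B_t(0) = {0} and hence Φ(0,t) = 0. -/
import Mathlib

open MeasureTheory Set

/-- The one-dimensional Canberra distance. Note that by the Lean convention `0 / 0 = 0`,
this automatically satisfies `canberra 0 0 = 0`. -/
noncomputable def canberra (x y : ℝ) : ℝ := |x - y| / (|x| + |y|)

lemma canberra_neg (x y : ℝ) : canberra (-x) (-y) = canberra x y := by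
  unfold canberra
  rw [show -x - -y = -(x - y) by ring, abs_neg, abs_neg, abs_neg]

lemma ball_pos (x t : ℝ) (hx : 0 < x) (ht0 : 0 < t) (ht1 : t < 1) :
    {y : ℝ | canberra x y < t} = Ioo ((1-t)/(1+t)*x) ((1+t)/(1-t)*x) := by
  have h1t : (0:ℝ) < 1 + t := by linarith
  have h1t' : (0:ℝ) < 1 - t := by linarith
  ext y
  simp only [canberra, mem_setOf_eq, mem_Ioo]
  rw [div_lt_iff₀ (by positivity : (0:ℝ) < |x| + |y|)]
  constructor
  · intro h
    have hy : 0 < y := by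
      by_contra hy
      push_neg at hy
      rw [abs_of_pos hx, abs_of_nonpos hy, abs_of_nonneg (by linarith : 0 ≤ x - y)] at h
      linarith [mul_lt_of_lt_one_left (by linarith : 0 < x + -y) ht1]
    rw [abs_of_pos hx, abs_of_pos hy, abs_lt] at h
    constructor
    · rw [div_mul_eq_mul_div, div_lt_iff₀ h1t]
      nlinarith
    · rw [div_mul_eq_mul_div, lt_div_iff₀ h1t']
      nlinarith
  · rintro ⟨hl, hr⟩
    have hy : 0 < y := lt_trans (by positivity) hl
    rw [div_mul_eq_mul_div, div_lt_iff₀ h1t] at hl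
    rw [div_mul_eq_mul_div, lt_div_iff₀ h1t'] at hr
    rw [abs_of_pos hx, abs_of_pos hy, abs_lt]
    constructor <;> nlinarith

theorem canberra_ball_volume :
    (∀ x : ℝ, x ≠ 0 → ∀ t ∈ Set.Ioo (0 : ℝ) 1,
      (volume {y : ℝ | canberra x y < t}).toReal = 4 * t * |x| / (1 - t ^ 2)) ∧
    (∀ t ∈ Set.Ioo (0 : ℝ) 1,
      {y : ℝ | canberra 0 y < t} = {0} ∧ volume {y : ℝ | canberra 0 y < t} = 0) := by
  constructor
  · intro x hx t ⟨ht0, ht1⟩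
    have h1t : (0:ℝ) < 1 + t := by linarith
    have h1t' : (0:ℝ) < 1 - t := by linarith
    have h2 : (1 - t^2) ≠ 0 := by nlinarith
    have hle : (1-t)/(1+t) ≤ (1+t)/(1-t) := by
      rw [div_le_div_iff₀ h1t h1t']; nlinarith
    rcases hx.lt_or_gt with hneg | hpos
    · have hset : {y : ℝ | canberra x y < t}
          = Ioo ((1+t)/(1-t)*x) ((1-t)/(1+t)*x) := by
        ext y
        have := ball_pos (-x) t (by linarith) ht0 ht1
        have hm : canberra x y = canberra (-x) (-y) := (canberra_neg x y).symm
        simp only [mem_setOf_eq, hm]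
        have : (-y ∈ {z : ℝ | canberra (-x) z < t}) ↔
            -y ∈ Ioo ((1-t)/(1+t)*(-x)) ((1+t)/(1-t)*(-x)) := by rw [this]
        simp only [mem_setOf_eq, mem_Ioo] at this
        rw [this]
        constructor <;> rintro ⟨a, b⟩ <;> constructor <;> nlinarith
      rw [hset, Real.volume_Ioo, ENNReal.toReal_ofReal
        (by nlinarith [mul_le_mul_of_nonpos_right hle hneg.le]), abs_of_neg hneg]
      field_simp [h1t.ne', h1t'.ne']
      ring
    · rw [ball_pos x t hpos ht0 ht1, Real.volume_Ioo,
        ENNReal.toReal_ofReal (by nlinarith [mul_le_mul_of_nonneg_right hle hpos.le]),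
        abs_of_pos hpos]
      field_simp [h1t.ne', h1t'.ne']
      ring
  · intro t ⟨ht0, ht1⟩
    have hset : {y : ℝ | canberra 0 y < t} = {0} := by
      ext y
      simp only [canberra, mem_setOf_eq, mem_singleton_iff, zero_sub, abs_neg, abs_zero,
        zero_add]
      constructor
      · intro h
        by_contra hy
        rw [div_self (abs_ne_zero.mpr hy)] at h
        linarith
      · rintro rfl; simpa using ht0
    exact ⟨hset, by rw [hset]; exact Real.volume_singleton⟩
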